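/- Let n ≥ 1 and m ≥ 1, and let Q₁,…,Q_m ⊂ ℝⁿ be axis-parallel cubes such that ℓ(Q₁) = min_{1 ≤ k ≤ m} ℓ(Q_k). For each k let Q*_k := (100√n)Q_k and Q**_k := (100√n)² Q_k (concentric dilates). If ⋂_{k=1}^m Q*_k ≠ ∅, then there exists an axis-parallel cube G ⊂ ℝⁿ such that ⋂_{k=1}^m Q*_k ⊆ G, the concentric double 2G satisfies 2G ⊆ ⋂_{k=1}^m Q**_k, and |Q₁| ≤ |G| ≤ (100√n)ⁿ |Q₁|. -/

import Mathlib

open MeasureTheory ENNReal Real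

noncomputable section

/-- The closed axis-parallel cube in ℝⁿ with center `z` and side length `ℓ`. -/
def cube (n : ℕ) (z : EuclideanSpace ℝ (Fin n)) (ℓ : ℝ) : Set (EuclideanSpace ℝ (Fin n)) :=
  {x | ∀ i, |x i - z i| ≤ ℓ / 2}

lemma cube_vol (n : ℕ) (z : EuclideanSpace ℝ (Fin n)) (ℓ : ℝ) :
    volume (cube n z ℓ) = ENNReal.ofReal ℓ ^ n := by
  have : cube n z ℓ = (MeasurableEquiv.toLp 2 (Fin n → ℝ)).symm ⁻¹'
      (Set.univ.pi fun i => Set.Icc (z i - ℓ / 2) (z i + ℓ / 2)) := by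
    ext x
    simp only [cube, Set.mem_setOf_eq, Set.mem_preimage, Set.mem_pi, Set.mem_univ, true_implies,
      Set.mem_Icc, MeasurableEquiv.coe_toLp_symm, MeasurableEquiv.toLp_symm_apply]
    constructor
    · intro h i
      have := h i
      rw [abs_le] at this
      constructor <;> [linarith [this.1]; linarith [this.2]]
    · intro h i
      rw [abs_le]
      have := h i
      constructor <;> [linarith [this.1]; linarith [this.2]]
  rw [this, (EuclideanSpace.volume_preserving_symm_measurableEquiv_toLp (Fin n)).measure_preimage
    (MeasurableSet.univ_pi fun _ => measurableSet_Icc).nullMeasurableSet]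
  rw [volume_pi_pi]
  simp only [Real.volume_Icc, show ∀ a : ℝ, a + ℓ / 2 - (a - ℓ / 2) = ℓ from fun a => by ring]
  rw [Finset.prod_const, Finset.card_univ, Fintype.card_fin]


theorem stmt8 (n m : ℕ) (hn : 1 ≤ n) (hm : 1 ≤ m)
    (z : Fin m → EuclideanSpace ℝ (Fin n)) (L : Fin m → ℝ) (hL : ∀ k, 0 < L k)
    (hmin : ∀ k, L ⟨0, by omega⟩ ≤ L k)
    (hne : (⋂ k, cube n (z k) (100 * Real.sqrt n * L k)).Nonempty) :
    ∃ (w : EuclideanSpace ℝ (Fin n)) (t : ℝ), 0 < t ∧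
      (⋂ k, cube n (z k) (100 * Real.sqrt n * L k)) ⊆ cube n w t ∧
      cube n w (2 * t) ⊆ (⋂ k, cube n (z k) ((100 * Real.sqrt n) ^ 2 * L k)) ∧
      volume (cube n (z ⟨0, by omega⟩) (L ⟨0, by omega⟩)) ≤ volume (cube n w t) ∧
      volume (cube n w t) ≤ ENNReal.ofReal ((100 * Real.sqrt n) ^ n) *
        volume (cube n (z ⟨0, by omega⟩) (L ⟨0, by omega⟩)) := by
  set k0 : Fin m := ⟨0, by omega⟩
  obtain ⟨p, hp⟩ := hne
  simp only [Set.mem_iInter] at hp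
  have hs : (1 : ℝ) ≤ Real.sqrt n := by
    rw [show (1:ℝ) = Real.sqrt 1 by simp]
    exact Real.sqrt_le_sqrt (by exact_mod_cast hn)
  have hs0 : (0 : ℝ) < Real.sqrt n := by linarith
  have hL0 : 0 < L k0 := hL k0
  refine ⟨z k0, 100 * Real.sqrt n * L k0, by positivity, ?_, ?_, ?_, ?_⟩
  · intro x hx
    simp only [Set.mem_iInter] at hx
    exact hx k0
  · intro x hx
    simp only [Set.mem_iInter]
    intro k
    intro i
    have h1 : |x i - z k0 i| ≤ 2 * (100 * Real.sqrt n * L k0) / 2 := hx i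
    have h2 : |p i - z k0 i| ≤ 100 * Real.sqrt n * L k0 / 2 := hp k0 i
    have h3 : |p i - z k i| ≤ 100 * Real.sqrt n * L k / 2 := hp k i
    have hLk : L k0 ≤ L k := hmin k
    have key : |x i - z k i| ≤ |x i - z k0 i| + |p i - z k0 i| + |p i - z k i| := by
      calc |x i - z k i| = |(x i - z k0 i) + (z k0 i - p i) + (p i - z k i)| := by ring_nf
        _ ≤ |(x i - z k0 i) + (z k0 i - p i)| + |p i - z k i| := abs_add_le _ _
        _ ≤ |x i - z k0 i| + |z k0 i - p i| + |p i - z k i| := by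
            gcongr; exact abs_add_le _ _
        _ = |x i - z k0 i| + |p i - z k0 i| + |p i - z k i| := by rw [abs_sub_comm (z k0 i)]
    have hsq : (100 * Real.sqrt n) ^ 2 * L k / 2 = 100 * Real.sqrt n * (50 * Real.sqrt n * L k) := by
      ring
    have hfin : 100 * Real.sqrt n * L k0 + 100 * Real.sqrt n * L k0 / 2
        + 100 * Real.sqrt n * L k / 2 ≤ (100 * Real.sqrt n) ^ 2 * L k / 2 := by
      rw [hsq]
      have h4 : 100 * Real.sqrt n * L k0 + 100 * Real.sqrt n * L k0 / 2
          + 100 * Real.sqrt n * L k / 2 ≤ 100 * Real.sqrt n * (2 * L k) := by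
        have := mul_le_mul_of_nonneg_left hLk (by positivity : (0:ℝ) ≤ 100 * Real.sqrt n)
        nlinarith
      refine h4.trans ?_
      have : (2 : ℝ) * L k ≤ 50 * Real.sqrt n * L k := by nlinarith [hL k]
      exact mul_le_mul_of_nonneg_left this (by positivity)
    calc |x i - z k i| ≤ |x i - z k0 i| + |p i - z k0 i| + |p i - z k i| := key
      _ ≤ 100 * Real.sqrt n * L k0 + 100 * Real.sqrt n * L k0 / 2
          + 100 * Real.sqrt n * L k / 2 := by
            have : 2 * (100 * Real.sqrt n * L k0) / 2 = 100 * Real.sqrt n * L k0 := by ring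
            rw [this] at h1; gcongr
      _ ≤ (100 * Real.sqrt n) ^ 2 * L k / 2 := hfin
  · apply measure_mono
    intro x hx i
    exact (hx i).trans (by nlinarith)
  · rw [cube_vol, cube_vol, ← ENNReal.ofReal_pow (by positivity), ← ENNReal.ofReal_pow hL0.le,
      ← ENNReal.ofReal_mul (by positivity)]
    exact ENNReal.ofReal_le_ofReal (le_of_eq (mul_pow _ _ _))
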